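/- Let H be a simple graph on Fin 15 with H.IsSRGWith 15 8 4 4. Then the adjacency matrix H.adjMatrix (ZMod 2) is nilpotent; equivalently, the characteristic polynomial of H.adjMatrix (ZMod 2) equals X^15 in (ZMod 2)[X]. -/

import Mathlib

open Polynomial

/-- The adjacency matrix of a strongly regular graph with parameters
`(15,8,4,4)` (e.g. the triangular graph `T(6)`) is nilpotent over `ZMod 2`;
equivalently its characteristic polynomial reduces to `X^15` mod 2. -/
theorem stmt_18 (H : SimpleGraph (Fin 15)) [DecidableRel H.Adj]
    (hH : H.IsSRGWith 15 8 4 4) :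
    IsNilpotent (H.adjMatrix (ZMod 2)) ∧
    (H.adjMatrix (ZMod 2)).charpoly = X ^ 15 := by
  have hsq : H.adjMatrix (ZMod 2) ^ 2 = 0 := by
    rw [hH.matrix_eq]
    have h8 : (8 : ZMod 2) = 0 := by decide
    have h4 : (4 : ZMod 2) = 0 := by decide
    simp only [← Nat.cast_smul_eq_nsmul (ZMod 2), Nat.cast_ofNat, h8, h4, zero_smul,
      add_zero, zero_add]
  have hnil : IsNilpotent (H.adjMatrix (ZMod 2)) := ⟨2, hsq⟩
  refine ⟨hnil, ?_⟩
  have key : ∀ {n : Type} [Fintype n] [DecidableEq n] (M : Matrix n n (ZMod 2)),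
      IsNilpotent M → M.charpoly = X ^ Fintype.card n := by
    intro n _ _ M hnil
    have := Matrix.isNilpotent_charpoly_sub_pow_of_isNilpotent hnil
    rw [isNilpotent_iff_eq_zero, sub_eq_zero] at this
    exact this
  have := key _ hnil
  rw [Fintype.card_fin] at this
  exact this
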